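/- Assume in addition that a_{ij} = α_i(b_j) ≠ 0 for all i ≠ j. Then there exists a linear subspace V of ℝ³ with 0 ≠ V ≠ ℝ³ invariant under σ₁, σ₂ and σ₃ if and only if det(a_{ij}) = 0. -/

import Mathlib

open Matrix

/-- With `σᵢ = bᵢ⊗αᵢ − 1` (where `αᵢ(bᵢ) = 2`) and all off-diagonal
`a i j = αᵢ(b_j)` nonzero, there is a nontrivial proper linear subspace of `ℝ³` invariant
under `σ₁, σ₂, σ₃` if and only if `det (a i j) = 0`. -/
theorem reducible_iff_det_cartan_eq_zero
    (b α : Fin 3 → Fin 3 → ℝ) (h2 : ∀ i, (∑ k, α i k * b i k) = 2)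
    (σ : Fin 3 → Matrix (Fin 3) (Fin 3) ℝ)
    (hσ : ∀ i, σ i = Matrix.vecMulVec (b i) (α i) - 1)
    (hne : ∀ i j, i ≠ j → (∑ k, α i k * b j k) ≠ 0) :
    (∃ V : Submodule ℝ (Fin 3 → ℝ), V ≠ ⊥ ∧ V ≠ ⊤ ∧
        ∀ i, ∀ v ∈ V, (σ i).mulVec v ∈ V) ↔
      (Matrix.of fun i j => ∑ k, α i k * b j k).det = 0 := by
  -- basic computation of σ i *ᵥ v
  have σmul : ∀ i v, (σ i).mulVec v = (∑ k, α i k * v k) • b i - v := by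
    intro i v
    rw [hσ i, sub_mulVec, one_mulVec]
    congr 1
    funext j
    simp only [mulVec, vecMulVec_apply, dotProduct, Pi.smul_apply, smul_eq_mul,
      Finset.sum_mul]
    exact Finset.sum_congr rfl fun k _ => by ring
  -- the Cartan matrix factors
  have hAfact : (Matrix.of fun i j => ∑ k, α i k * b j k)
      = Matrix.of α * (Matrix.of b)ᵀ := by
    ext i j
    simp [Matrix.mul_apply]
  have hdetfact : (Matrix.of fun i j => ∑ k, α i k * b j k).det
      = (Matrix.of α).det * (Matrix.of b).det := by
    rw [hAfact, det_mul, det_transpose]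
  constructor
  · rintro ⟨V, hbot, htop, hinv⟩
    by_contra hA
    rw [hdetfact] at hA
    obtain ⟨hα, hb⟩ := mul_ne_zero_iff.mp hA
    obtain ⟨v, hvV, hv0⟩ := Submodule.ne_bot_iff V |>.mp hbot
    -- some α i (v) ≠ 0
    have hex : ∃ i, (∑ k, α i k * v k) ≠ 0 := by
      by_contra h
      push_neg at h
      apply hα
      rw [← Matrix.exists_mulVec_eq_zero_iff]
      refine ⟨v, hv0, ?_⟩
      funext i
      simpa [mulVec, dotProduct] using h i
    obtain ⟨i, hi⟩ := hex
    -- b i ∈ V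
    have hbiV : b i ∈ V := by
      have h1 : (∑ k, α i k * v k) • b i ∈ V := by
        have := V.add_mem (hinv i v hvV) hvV
        rwa [σmul, sub_add_cancel] at this
      have := V.smul_mem (∑ k, α i k * v k)⁻¹ h1
      rwa [smul_smul, inv_mul_cancel₀ hi, one_smul] at this
    -- all b j ∈ V
    have hballV : ∀ j, b j ∈ V := by
      intro j
      rcases eq_or_ne j i with rfl | hji
      · exact hbiV
      · have ha := hne j i hji
        have h1 : (∑ k, α j k * b i k) • b j ∈ V := by
          have := V.add_mem (hinv j (b i) hbiV) hbiV
          rwa [σmul, sub_add_cancel] at this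
        have := V.smul_mem (∑ k, α j k * b i k)⁻¹ h1
        rwa [smul_smul, inv_mul_cancel₀ ha, one_smul] at this
    -- b spans, so V = ⊤
    apply htop
    have hsurj : Function.Surjective ((Matrix.of b)ᵀ).mulVec := by
      rw [Matrix.mulVec_surjective_iff_isUnit, Matrix.isUnit_iff_isUnit_det,
        det_transpose, isUnit_iff_ne_zero]
      exact hb
    have hspan : Submodule.span ℝ (Set.range b) = ⊤ := by
      have := Matrix.range_mulVecLin ((Matrix.of b)ᵀ)
      change _ = Submodule.span ℝ (Set.range (Matrix.of b)) at this
      rw [show Set.range b = Set.range (Matrix.of b) from rfl, ← this,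
        LinearMap.range_eq_top]
      exact hsurj
    rw [eq_top_iff, ← hspan]
    exact Submodule.span_le.mpr (Set.range_subset_iff.mpr hballV)
  · intro hdet
    rw [hdetfact, mul_eq_zero] at hdet
    rcases hdet with hα | hb
    · -- kernel of the α's
      obtain ⟨v, hv0, hv⟩ := (Matrix.exists_mulVec_eq_zero_iff).mpr hα
      refine ⟨LinearMap.ker (Matrix.of α).mulVecLin, ?_, ?_, ?_⟩
      · rw [Submodule.ne_bot_iff]
        exact ⟨v, by simpa using hv, hv0⟩
      · intro h
        have hb0 : b 0 ∈ LinearMap.ker (Matrix.of α).mulVecLin := h ▸ Submodule.mem_top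
        have : ((Matrix.of α).mulVec (b 0)) 0 = 0 := by
          rw [show (Matrix.of α).mulVec (b 0) = 0 from hb0]; rfl
        simp only [mulVec, dotProduct, of_apply] at this
        rw [h2 0] at this
        norm_num at this
      · intro i w hw
        have hw' : (Matrix.of α).mulVec w = 0 := hw
        have hzero : (∑ k, α i k * w k) = 0 := by
          have := congrFun hw' i
          simpa [mulVec, dotProduct] using this
        rw [σmul, hzero, zero_smul, zero_sub]
        exact Submodule.neg_mem _ hw
    · -- span of the b's
      refine ⟨Submodule.span ℝ (Set.range b), ?_, ?_, ?_⟩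
      · rw [Submodule.ne_bot_iff]
        refine ⟨b 0, Submodule.subset_span ⟨0, rfl⟩, ?_⟩
        intro h
        have := h2 0
        rw [h] at this
        simp at this
      · intro h
        have hrange : LinearMap.range ((Matrix.of b)ᵀ).mulVecLin = ⊤ := by
          rw [Matrix.range_mulVecLin]
          exact h
        have hsurj : Function.Surjective ((Matrix.of b)ᵀ).mulVec := by
          intro y
          obtain ⟨x, hx⟩ := LinearMap.range_eq_top.mp hrange y
          exact ⟨x, hx⟩
        rw [Matrix.mulVec_surjective_iff_isUnit, Matrix.isUnit_iff_isUnit_det,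
          det_transpose, isUnit_iff_ne_zero] at hsurj
        exact hsurj hb
      · intro i w hw
        rw [σmul]
        exact Submodule.sub_mem _
          (Submodule.smul_mem _ _ (Submodule.subset_span ⟨i, rfl⟩)) hw
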